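/- Let $\beta \geq 0$ and let $\omega$ be a weight on $\mathbb{D}$ with associated function $\tau_\omega$ satisfying $\tau_\omega^2(z) \asymp (1-|z|^2)^{2+\beta}$. Define $d\lambda_\omega = dA/\tau_\omega^2$ and the distribution function $\mathcal{R}_{z,\omega}(t) = \lambda_\omega(\{w \in \mathbb{D} : \tau_\omega(w) > t\})$. Then $\mathcal{R}_{z,\omega}(t) \asymp t^{-\frac{2(1+\beta)}{2+\beta}}$ as $t \to 0^+$, and consequently the decreasing rearrangement satisfies $\mathcal{R}^+_{z,\omega}(n) \asymp n^{-\frac{2+\beta}{2(1+\beta)}}$ as $n\to\infty$. -/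

import Mathlib

open MeasureTheory Metric
open scoped ENNReal Real

lemma vol_ball_complex (r : ℝ) (hr : 0 ≤ r) :
    volume (ball (0:ℂ) r) = ENNReal.ofReal (Real.pi * r ^ 2) := by
  rw [Complex.volume_ball]
  rw [← ENNReal.ofReal_pow hr, ← ENNReal.ofReal_coe_nnreal, NNReal.coe_real_pi,
    ← ENNReal.ofReal_mul (by positivity), mul_comm]

lemma vol_annulus_le (ε : ℝ) (hε : 0 ≤ ε) :
    volume {z : ℂ | z ∈ ball (0:ℂ) 1 ∧ 1 - ‖z‖ ^ 2 ≤ ε} ≤ ENNReal.ofReal (Real.pi * ε) := by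
  rcases le_or_gt 1 ε with h | h
  · calc volume {z : ℂ | z ∈ ball (0:ℂ) 1 ∧ 1 - ‖z‖ ^ 2 ≤ ε}
        ≤ volume (ball (0:ℂ) 1) := measure_mono fun z hz => hz.1
      _ = ENNReal.ofReal (Real.pi * 1 ^ 2) := vol_ball_complex 1 zero_le_one
      _ ≤ ENNReal.ofReal (Real.pi * ε) := by
          apply ENNReal.ofReal_le_ofReal; nlinarith [Real.pi_pos]
  · have hsub : {z : ℂ | z ∈ ball (0:ℂ) 1 ∧ 1 - ‖z‖ ^ 2 ≤ ε}
        ⊆ ball (0:ℂ) 1 \ ball (0:ℂ) (Real.sqrt (1 - ε)) := by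
      rintro z ⟨hz1, hz2⟩
      refine ⟨hz1, fun hz3 => ?_⟩
      rw [mem_ball_zero_iff] at hz3
      have h4 : ‖z‖ ^ 2 < Real.sqrt (1 - ε) ^ 2 :=
        pow_lt_pow_left₀ hz3 (norm_nonneg z) two_ne_zero
      rw [Real.sq_sqrt (by linarith)] at h4
      linarith
    refine (measure_mono hsub).trans ?_
    rw [measure_diff (ball_subset_ball (Real.sqrt_le_one.mpr (by linarith)))
        measurableSet_ball.nullMeasurableSet (measure_ball_lt_top).ne,
      vol_ball_complex _ zero_le_one, vol_ball_complex _ (Real.sqrt_nonneg _),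
      Real.sq_sqrt (by linarith)]
    rw [← ENNReal.ofReal_sub _ (mul_nonneg Real.pi_pos.le (by linarith))]
    apply ENNReal.ofReal_le_ofReal; nlinarith

lemma vol_annulus_ge (a : ℝ) (ha : 0 < a) (ha2 : 2 * a ≤ 1) :
    ENNReal.ofReal (Real.pi * a)
      ≤ volume {z : ℂ | z ∈ ball (0:ℂ) 1 ∧ a < 1 - ‖z‖ ^ 2 ∧ 1 - ‖z‖ ^ 2 < 2 * a} := by
  have h12a : 0 ≤ 1 - 2 * a := by linarith
  have hsub : ball (0:ℂ) (Real.sqrt (1 - a)) \ closedBall (0:ℂ) (Real.sqrt (1 - 2 * a))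
      ⊆ {z : ℂ | z ∈ ball (0:ℂ) 1 ∧ a < 1 - ‖z‖ ^ 2 ∧ 1 - ‖z‖ ^ 2 < 2 * a} := by
    rintro z ⟨hz1, hz2⟩
    rw [mem_ball_zero_iff] at hz1
    rw [mem_closedBall_zero_iff, not_le] at hz2
    have h1 : ‖z‖ ^ 2 < Real.sqrt (1 - a) ^ 2 := pow_lt_pow_left₀ hz1 (norm_nonneg z) two_ne_zero
    have h2 : Real.sqrt (1 - 2 * a) ^ 2 < ‖z‖ ^ 2 :=
      pow_lt_pow_left₀ hz2 (Real.sqrt_nonneg _) two_ne_zero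
    rw [Real.sq_sqrt (by linarith)] at h1
    rw [Real.sq_sqrt h12a] at h2
    exact ⟨mem_ball_zero_iff.mpr (hz1.trans_le (Real.sqrt_le_one.mpr (by linarith))),
      by linarith, by linarith⟩
  refine le_trans ?_ (measure_mono hsub)
  have hss : closedBall (0:ℂ) (Real.sqrt (1 - 2 * a)) ⊆ ball (0:ℂ) (Real.sqrt (1 - a)) := by
    intro z hz
    rw [mem_closedBall_zero_iff] at hz
    rw [mem_ball_zero_iff]
    exact hz.trans_lt (Real.sqrt_lt_sqrt h12a (by linarith))
  rw [measure_diff hss measurableSet_closedBall.nullMeasurableSet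
      (measure_closedBall_lt_top).ne, vol_ball_complex _ (Real.sqrt_nonneg _)]
  rw [Complex.volume_closedBall, ← ENNReal.ofReal_pow (Real.sqrt_nonneg _),
    ← ENNReal.ofReal_coe_nnreal, NNReal.coe_real_pi,
    ← ENNReal.ofReal_mul (by positivity), Real.sq_sqrt h12a, Real.sq_sqrt (by linarith)]
  rw [← ENNReal.ofReal_sub _ (by positivity)]
  apply ENNReal.ofReal_le_ofReal; nlinarith [Real.pi_pos]

lemma lower_R (β : ℝ) (hβ : 0 ≤ β) (τ : ℂ → ℝ)
    (hτpos : ∀ z ∈ ball (0:ℂ) 1, 0 < τ z) (c C : ℝ) (hc : 0 < c) (hC : 0 < C)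
    (hcomp : ∀ z ∈ ball (0:ℂ) 1,
      c * (1 - ‖z‖ ^ 2) ^ (2 + β) ≤ τ z ^ 2 ∧ τ z ^ 2 ≤ C * (1 - ‖z‖ ^ 2) ^ (2 + β))
    (t : ℝ) (ht : 0 < t) (hsmall : 2 * (t ^ 2 / c) ^ ((2 + β)⁻¹) ≤ 1) :
    ENNReal.ofReal ((Real.pi * C⁻¹ * 2 ^ (-(2 + β)) * c ^ ((1 + β) / (2 + β)))
        * t ^ (-(2 * (1 + β) / (2 + β))))
      ≤ ((volume.restrict (ball (0:ℂ) 1)).withDensity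
          (fun z => ENNReal.ofReal (1 / τ z ^ 2))) {w ∈ ball (0:ℂ) 1 | t < τ w} := by
  set p := 2 + β with hp
  have hp0 : 0 < p := by positivity
  have hu : 0 < t ^ 2 / c := by positivity
  set u := t ^ 2 / c with hudef
  set δ := u ^ p⁻¹ with hδdef
  have hδ : 0 < δ := Real.rpow_pos_of_pos hu _
  have hδp : δ ^ p = u := Real.rpow_inv_rpow hu.le hp0.ne'
  set Ann := ball (0:ℂ) 1 ∩ (fun z : ℂ => 1 - ‖z‖ ^ 2) ⁻¹' Set.Ioo δ (2 * δ) with hAnn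
  have hAnnMeas : MeasurableSet Ann :=
    measurableSet_ball.inter
      (((continuous_const.sub ((continuous_norm).pow 2)).measurable) measurableSet_Ioo)
  have hAnnSub : Ann ⊆ {w ∈ ball (0:ℂ) 1 | t < τ w} := by
    rintro z ⟨hzb, hzi⟩
    simp only [Set.mem_preimage, Set.mem_Ioo] at hzi
    have h1 := (hcomp z hzb).1
    have h2 : c * δ ^ p < c * (1 - ‖z‖ ^ 2) ^ p :=
      mul_lt_mul_of_pos_left (Real.rpow_lt_rpow hδ.le hzi.1 hp0) hc
    have h3 : t ^ 2 < τ z ^ 2 := by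
      rw [hδp, hudef] at h2
      have : c * (t ^ 2 / c) = t ^ 2 := by field_simp
      rw [this] at h2
      linarith
    exact ⟨hzb, lt_of_pow_lt_pow_left₀ 2 (hτpos z hzb).le h3⟩
  refine le_trans ?_ (measure_mono hAnnSub)
  rw [MeasureTheory.withDensity_apply _ hAnnMeas, Measure.restrict_restrict hAnnMeas,
    Set.inter_eq_self_of_subset_left Set.inter_subset_left]
  have hdens : ∀ z ∈ Ann, ENNReal.ofReal ((C * (2 * δ) ^ p)⁻¹) ≤ ENNReal.ofReal (1 / τ z ^ 2) := by
    rintro z ⟨hzb, hzi⟩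
    simp only [Set.mem_preimage, Set.mem_Ioo] at hzi
    have h2 := (hcomp z hzb).2
    have hτz : 0 < τ z ^ 2 := pow_pos (hτpos z hzb) 2
    have h3 : τ z ^ 2 ≤ C * (2 * δ) ^ p := by
      refine h2.trans (mul_le_mul_of_nonneg_left ?_ hC.le)
      exact Real.rpow_le_rpow (by nlinarith [norm_nonneg z, mem_ball_zero_iff.mp hzb])
        hzi.2.le hp0.le
    apply ENNReal.ofReal_le_ofReal
    rw [one_div]
    exact inv_anti₀ hτz h3
  calc ENNReal.ofReal ((Real.pi * C⁻¹ * 2 ^ (-p) * c ^ ((1 + β) / p))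
        * t ^ (-(2 * (1 + β) / p)))
      ≤ ENNReal.ofReal ((C * (2 * δ) ^ p)⁻¹) * ENNReal.ofReal (Real.pi * δ) := ?_
    _ ≤ ENNReal.ofReal ((C * (2 * δ) ^ p)⁻¹) * volume Ann := by
        gcongr
        refine (vol_annulus_ge δ hδ hsmall).trans (le_of_eq (by congr 1))
    _ = ∫⁻ _ in Ann, ENNReal.ofReal ((C * (2 * δ) ^ p)⁻¹) ∂volume := by
        rw [setLIntegral_const]
    _ ≤ ∫⁻ z in Ann, ENNReal.ofReal (1 / τ z ^ 2) ∂volume := setLIntegral_mono' hAnnMeas hdens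
  -- the real-number identity
  rw [← ENNReal.ofReal_mul (by positivity)]
  apply ENNReal.ofReal_le_ofReal
  apply le_of_eq
  have h2δ : (2 * δ) ^ p = 2 ^ p * u := by
    rw [Real.mul_rpow (by norm_num) hδ.le, hδp]
  have hδu : δ = u ^ p⁻¹ := rfl
  have e1 : c ^ ((1 + β) / p) * t ^ (-(2 * (1 + β) / p)) = u ^ (p⁻¹ - 1) := by
    have h1p : 1 + β = p - 1 := by rw [hp]; ring
    rw [hudef, Real.div_rpow (sq_nonneg t) hc.le,
      ← Real.rpow_natCast t 2, ← Real.rpow_mul ht.le]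
    push_cast
    rw [show (2:ℝ) * (p⁻¹ - 1) = -(2 * (1 + β) / p) by rw [h1p]; field_simp; ring,
      show (p⁻¹ - 1 : ℝ) = -((1+β)/p) by rw [h1p]; field_simp; ring,
      Real.rpow_neg hc.le, div_inv_eq_mul]
    ring
  rw [h2δ, mul_inv, mul_inv, hδu]
  rw [show u ^ (p⁻¹ - 1) = u ^ p⁻¹ * u⁻¹ by
    rw [Real.rpow_sub hu, Real.rpow_one, div_eq_mul_inv]]  at e1
  rw [mul_assoc, e1, ← Real.rpow_neg (by norm_num : (0:ℝ) ≤ 2)]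
  ring

lemma upper_R (β : ℝ) (hβ : 0 ≤ β) (τ : ℂ → ℝ)
    (hτpos : ∀ z ∈ ball (0:ℂ) 1, 0 < τ z) (c C : ℝ) (hc : 0 < c) (hC : 0 < C)
    (hcomp : ∀ z ∈ ball (0:ℂ) 1,
      c * (1 - ‖z‖ ^ 2) ^ (2 + β) ≤ τ z ^ 2 ∧ τ z ^ 2 ≤ C * (1 - ‖z‖ ^ 2) ^ (2 + β))
    (t : ℝ) (ht : 0 < t) :
    ((volume.restrict (ball (0:ℂ) 1)).withDensity
        (fun z => ENNReal.ofReal (1 / τ z ^ 2))) {w ∈ ball (0:ℂ) 1 | t < τ w}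
      ≤ ENNReal.ofReal ((4 * Real.pi * c⁻¹ * C ^ ((1 + β) / (2 + β)))
          * t ^ (-(2 * (1 + β) / (2 + β)))) := by
  classical
  set p := 2 + β with hp
  have hp0 : 0 < p := by positivity
  have hp2 : 2 ≤ p := by rw [hp]; linarith
  have hu : 0 < t ^ 2 / C := by positivity
  set u := t ^ 2 / C with hudef
  set δ := u ^ p⁻¹ with hδdef
  have hδ : 0 < δ := Real.rpow_pos_of_pos hu _
  set lamω := ((volume.restrict (ball (0:ℂ) 1)).withDensity
      (fun z => ENNReal.ofReal (1 / τ z ^ 2))) with hlam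
  set A : ℕ → Set ℂ := fun k => ball (0:ℂ) 1 ∩
      (fun z : ℂ => 1 - ‖z‖ ^ 2) ⁻¹' Set.Ioc (2 ^ k * δ) (2 ^ (k + 1) * δ) with hA
  have hAmeas : ∀ k, MeasurableSet (A k) := fun k =>
    measurableSet_ball.inter
      (((continuous_const.sub ((continuous_norm).pow 2)).measurable) measurableSet_Ioc)
  -- covering
  have hsub : {w ∈ ball (0:ℂ) 1 | t < τ w} ⊆ ⋃ k, A k := by
    rintro z ⟨hzb, htz⟩
    have hx1 : ‖z‖ ^ 2 < 1 := by
      have := mem_ball_zero_iff.mp hzb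
      nlinarith [norm_nonneg z]
    have hy : 0 < 1 - ‖z‖ ^ 2 := by linarith
    set y := 1 - ‖z‖ ^ 2 with hy'
    have h2 := (hcomp z hzb).2
    have ht2 : t ^ 2 < τ z ^ 2 := pow_lt_pow_left₀ htz ht.le two_ne_zero
    have huy : u < y ^ p := by
      rw [hudef]
      rw [div_lt_iff₀ hC]
      calc t ^ 2 < τ z ^ 2 := ht2
        _ ≤ C * y ^ p := h2
        _ = y ^ p * C := mul_comm _ _
    have hδy : δ < y := by
      have := Real.rpow_lt_rpow hu.le huy (inv_pos.mpr hp0)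
      rwa [Real.rpow_rpow_inv hy.le hp0.ne'] at this
    have hex : ∃ n : ℕ, y ≤ 2 ^ n * δ := by
      obtain ⟨n, hn⟩ := pow_unbounded_of_one_lt (y / δ) (one_lt_two (α := ℝ))
      exact ⟨n, by rw [div_lt_iff₀ hδ] at hn; linarith [hn]⟩
    cases hfind : Nat.find hex with
    | zero =>
        have hks := Nat.find_spec hex
        rw [hfind, pow_zero, one_mul] at hks
        exact absurd hks (not_le.mpr hδy)
    | succ m =>
        have hmin : ¬ y ≤ 2 ^ m * δ := Nat.find_min hex (by omega)
        have hks := Nat.find_spec hex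
        rw [hfind] at hks
        refine Set.mem_iUnion.mpr ⟨m, hzb, ?_⟩
        simp only [Set.mem_preimage, Set.mem_Ioc]
        exact ⟨not_le.mp hmin, hks⟩
  -- per-annulus bound
  have hAk : ∀ k : ℕ, lamω (A k) ≤
      ENNReal.ofReal ((c⁻¹ * ((2:ℝ) ^ k * δ) ^ (-p)) * (Real.pi * (2 ^ (k + 1) * δ))) := by
    intro k
    have h2kδ : 0 < (2:ℝ) ^ k * δ := by positivity
    rw [hlam, MeasureTheory.withDensity_apply _ (hAmeas k),
      Measure.restrict_restrict (hAmeas k),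
      Set.inter_eq_self_of_subset_left Set.inter_subset_left]
    calc ∫⁻ z in A k, ENNReal.ofReal (1 / τ z ^ 2) ∂volume
        ≤ ∫⁻ _ in A k, ENNReal.ofReal (c⁻¹ * ((2:ℝ) ^ k * δ) ^ (-p)) ∂volume := by
          refine setLIntegral_mono' (hAmeas k) ?_
          rintro z ⟨hzb, hzi⟩
          simp only [Set.mem_preimage, Set.mem_Ioc] at hzi
          have h1 := (hcomp z hzb).1
          have hlow : c * ((2:ℝ) ^ k * δ) ^ p ≤ τ z ^ 2 := by
            refine le_trans ?_ h1
            exact mul_le_mul_of_nonneg_left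
              (Real.rpow_le_rpow h2kδ.le hzi.1.le hp0.le) hc.le
          have hpos : 0 < c * ((2:ℝ) ^ k * δ) ^ p := by
            positivity
          apply ENNReal.ofReal_le_ofReal
          rw [one_div, Real.rpow_neg h2kδ.le, ← mul_inv]
          exact inv_anti₀ hpos hlow
      _ = ENNReal.ofReal (c⁻¹ * ((2:ℝ) ^ k * δ) ^ (-p)) * volume (A k) := setLIntegral_const _ _
      _ ≤ ENNReal.ofReal (c⁻¹ * ((2:ℝ) ^ k * δ) ^ (-p)) *
            ENNReal.ofReal (Real.pi * (2 ^ (k + 1) * δ)) := by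
          gcongr
          refine le_trans (measure_mono ?_) (vol_annulus_le _ (by positivity))
          rintro z ⟨hzb, hzi⟩
          simp only [Set.mem_preimage, Set.mem_Ioc] at hzi
          exact ⟨hzb, hzi.2⟩
      _ = ENNReal.ofReal ((c⁻¹ * ((2:ℝ) ^ k * δ) ^ (-p)) * (Real.pi * (2 ^ (k + 1) * δ))) := by
          rw [← ENNReal.ofReal_mul (by positivity)]
  -- geometric identity for the terms
  have hterm : ∀ k : ℕ, (c⁻¹ * ((2:ℝ) ^ k * δ) ^ (-p)) * (Real.pi * (2 ^ (k + 1) * δ))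
      = (2 * Real.pi * c⁻¹ * δ ^ (1 - p)) * ((2:ℝ) ^ (1 - p)) ^ k := by
    intro k
    have h2 : (0:ℝ) ≤ 2 := by norm_num
    rw [Real.mul_rpow (by positivity) hδ.le,
      ← Real.rpow_natCast (2:ℝ) k, ← Real.rpow_natCast (2:ℝ) (k + 1),
      ← Real.rpow_natCast ((2:ℝ) ^ (1 - p)) k,
      ← Real.rpow_mul h2, ← Real.rpow_mul h2]
    push_cast
    rw [show ((1:ℝ) - p) * (k:ℝ) = (k:ℝ) * (-p) + (k:ℝ) by ring,
      show ((k:ℝ) + 1) = (k:ℝ) + 1 by ring,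
      Real.rpow_add (by norm_num : (0:ℝ) < 2), Real.rpow_add (by norm_num : (0:ℝ) < 2),
      Real.rpow_one,
      show (1:ℝ) - p = -p + 1 by ring, Real.rpow_add hδ, Real.rpow_one]
    ring
  -- sum up
  have hr : ENNReal.ofReal ((2:ℝ) ^ (1 - p)) ≤ 2⁻¹ := by
    have : (2:ℝ) ^ (1 - p) ≤ (2:ℝ) ^ (-1 : ℝ) :=
      Real.rpow_le_rpow_of_exponent_le one_le_two (by linarith)
    refine le_trans (ENNReal.ofReal_le_ofReal this) ?_
    rw [Real.rpow_neg_one, ENNReal.ofReal_inv_of_pos two_pos, ENNReal.ofReal_ofNat]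
  have hK : (0:ℝ) ≤ 2 * Real.pi * c⁻¹ * δ ^ (1 - p) := by positivity
  calc lamω {w ∈ ball (0:ℂ) 1 | t < τ w}
      ≤ lamω (⋃ k, A k) := measure_mono hsub
    _ ≤ ∑' k, lamω (A k) := measure_iUnion_le _
    _ ≤ ∑' k, ENNReal.ofReal ((2 * Real.pi * c⁻¹ * δ ^ (1 - p)) * ((2:ℝ) ^ (1 - p)) ^ k) :=
        ENNReal.tsum_le_tsum fun k => (hAk k).trans (le_of_eq (by rw [hterm k]))
    _ = ∑' k, ENNReal.ofReal (2 * Real.pi * c⁻¹ * δ ^ (1 - p)) *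
          (ENNReal.ofReal ((2:ℝ) ^ (1 - p))) ^ k := by
        congr 1; funext k
        rw [ENNReal.ofReal_mul hK, ENNReal.ofReal_pow (by positivity)]
    _ = ENNReal.ofReal (2 * Real.pi * c⁻¹ * δ ^ (1 - p)) *
          (1 - ENNReal.ofReal ((2:ℝ) ^ (1 - p)))⁻¹ := by
        rw [ENNReal.tsum_mul_left, ENNReal.tsum_geometric]
    _ ≤ ENNReal.ofReal (2 * Real.pi * c⁻¹ * δ ^ (1 - p)) * 2 := by
        gcongr
        refine le_trans (ENNReal.inv_le_inv' (le_trans (by rw [ENNReal.one_sub_inv_two])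
          (tsub_le_tsub_left hr 1))) ?_
        rw [inv_inv]
    _ = ENNReal.ofReal ((2 * Real.pi * c⁻¹ * δ ^ (1 - p)) * 2) := by
        rw [ENNReal.ofReal_mul hK, ENNReal.ofReal_ofNat]
    _ ≤ ENNReal.ofReal ((4 * Real.pi * c⁻¹ * C ^ ((1 + β) / p))
          * t ^ (-(2 * (1 + β) / p))) := by
        apply ENNReal.ofReal_le_ofReal
        apply le_of_eq
        have h1p : 1 + β = p - 1 := by rw [hp]; ring
        have e1 : C ^ ((1 + β) / p) * t ^ (-(2 * (1 + β) / p)) = u ^ (p⁻¹ - 1) := by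
          rw [hudef, Real.div_rpow (sq_nonneg t) hC.le,
            ← Real.rpow_natCast t 2, ← Real.rpow_mul ht.le]
          push_cast
          rw [show (2:ℝ) * (p⁻¹ - 1) = -(2 * (1 + β) / p) by rw [h1p]; field_simp; ring,
            show (p⁻¹ - 1 : ℝ) = -((1 + β) / p) by rw [h1p]; field_simp; ring,
            Real.rpow_neg hC.le, div_inv_eq_mul]
          ring
        have e2 : δ ^ (1 - p) = u ^ (p⁻¹ - 1) := by
          rw [hδdef, ← Real.rpow_mul hu.le]
          congr 1
          field_simp
        rw [e2, ← e1]
        ring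

/-- if `τ_ω²(z) ≍ (1-|z|²)^{2+β}` then the distribution function of
`τ_ω` with respect to `dλ_ω = dA/τ_ω²` satisfies `𝓡(t) ≍ t^{-2(1+β)/(2+β)}` as
`t → 0⁺`, and the decreasing rearrangement satisfies
`𝓡⁺(n) ≍ n^{-(2+β)/(2(1+β))}`. -/
theorem stmt15 (β : ℝ) (hβ : 0 ≤ β) (τ : ℂ → ℝ)
    (hτpos : ∀ z ∈ ball (0:ℂ) 1, 0 < τ z)
    (hcomp : ∃ c > (0:ℝ), ∃ C > (0:ℝ), ∀ z ∈ ball (0:ℂ) 1,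
      c * (1 - ‖z‖ ^ 2) ^ (2 + β) ≤ τ z ^ 2 ∧
      τ z ^ 2 ≤ C * (1 - ‖z‖ ^ 2) ^ (2 + β)) :
    -- the measure `λ_ω` and the distribution function `𝓡`
    ∀ lamω : Measure ℂ, lamω =
        (volume.restrict (ball (0:ℂ) 1)).withDensity
          (fun z => ENNReal.ofReal (1 / τ z ^ 2)) →
    ∀ R : ℝ → ℝ≥0∞, (∀ t : ℝ, R t = lamω {w ∈ ball (0:ℂ) 1 | t < τ w}) →
    ∀ Rplus : ℝ → ℝ, (∀ x : ℝ, Rplus x =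
        sSup {t : ℝ | 0 < t ∧ ENNReal.ofReal x ≤ R t}) →
      ((∃ c > (0:ℝ), ∃ C > (0:ℝ), ∃ t₀ > (0:ℝ), ∀ t : ℝ, 0 < t → t < t₀ →
          ENNReal.ofReal (c * t ^ (-(2 * (1 + β) / (2 + β)))) ≤ R t ∧
          R t ≤ ENNReal.ofReal (C * t ^ (-(2 * (1 + β) / (2 + β))))) ∧
       (∃ c > (0:ℝ), ∃ C > (0:ℝ), ∃ n₀ : ℕ, ∀ n : ℕ, n₀ ≤ n →
          c * (n : ℝ) ^ (-((2 + β) / (2 * (1 + β)))) ≤ Rplus n ∧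
          Rplus n ≤ C * (n : ℝ) ^ (-((2 + β) / (2 * (1 + β)))))) := by
  obtain ⟨c, hc, C, hC, hcomp⟩ := hcomp
  intro lamω hlam R hR Rplus hRp
  set p := 2 + β with hp
  have hp0 : 0 < p := by positivity
  set α := 2 * (1 + β) / p with hα'
  have hα : 0 < α := by positivity
  set cL := Real.pi * C⁻¹ * 2 ^ (-p) * c ^ ((1 + β) / p) with hcL
  set CU := 4 * Real.pi * c⁻¹ * C ^ ((1 + β) / p) with hCU
  have hcL0 : 0 < cL := by positivity
  have hCU0 : 0 < CU := by positivity
  set t₀ := Real.sqrt (c * 2 ^ (-p)) with ht₀'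
  have ht₀ : 0 < t₀ := Real.sqrt_pos.mpr (by positivity)
  have hup : ∀ t : ℝ, 0 < t → R t ≤ ENNReal.ofReal (CU * t ^ (-α)) := by
    intro t htp
    rw [hR t, hlam]
    exact upper_R β hβ τ hτpos c C hc hC hcomp t htp
  have hlo : ∀ t : ℝ, 0 < t → t < t₀ → ENNReal.ofReal (cL * t ^ (-α)) ≤ R t := by
    intro t htp htt
    rw [hR t, hlam]
    apply lower_R β hβ τ hτpos c C hc hC hcomp t htp
    have h2 : t ^ 2 < Real.sqrt (c * 2 ^ (-p)) ^ 2 := pow_lt_pow_left₀ htt htp.le two_ne_zero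
    rw [Real.sq_sqrt (by positivity)] at h2
    have h3 : t ^ 2 / c < (2:ℝ) ^ (-p) := by rw [div_lt_iff₀ hc]; nlinarith [h2]
    have h4 : (t ^ 2 / c) ^ ((2 + β)⁻¹) < ((2:ℝ) ^ (-p)) ^ (p⁻¹) :=
      Real.rpow_lt_rpow (by positivity) h3 (inv_pos.mpr hp0)
    rw [← Real.rpow_mul (by norm_num : (0:ℝ) ≤ 2),
      show (-p) * p⁻¹ = -1 by field_simp, Real.rpow_neg_one] at h4
    have : (t ^ 2 / c) ^ ((2 + β)⁻¹) < 2⁻¹ := h4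
    linarith
  constructor
  · exact ⟨cL, hcL0, CU, hCU0, t₀, ht₀, fun t htp htt => ⟨hlo t htp htt, hup t htp⟩⟩
  · -- rearrangement part
    have hmono : ∀ s t : ℝ, s ≤ t → R t ≤ R s := by
      intro s t hst
      rw [hR s, hR t]
      exact measure_mono fun z hz => ⟨hz.1, hst.trans_lt hz.2⟩
    obtain ⟨n₀, hn₀⟩ := exists_nat_gt (max (max (cL / t₀ ^ α) (CU * (t₀ / 2) ^ (-α))) 1)
    refine ⟨cL ^ α⁻¹, Real.rpow_pos_of_pos hcL0 _, CU ^ α⁻¹, Real.rpow_pos_of_pos hCU0 _,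
      n₀, fun n hn => ?_⟩
    have hnn : (n₀ : ℝ) ≤ (n : ℝ) := Nat.cast_le.mpr hn
    have hn1 : (1 : ℝ) < (n : ℝ) := lt_of_le_of_lt (le_max_right _ 1) (hn₀.trans_le hnn)
    have hnpos : (0 : ℝ) < (n : ℝ) := by linarith
    have hna : cL / t₀ ^ α < (n : ℝ) :=
      lt_of_le_of_lt ((le_max_left _ _).trans (le_max_left _ 1)) (hn₀.trans_le hnn)
    have hnb : CU * (t₀ / 2) ^ (-α) < (n : ℝ) :=
      lt_of_le_of_lt ((le_max_right _ _).trans (le_max_left _ 1)) (hn₀.trans_le hnn)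
    set T := {s : ℝ | 0 < s ∧ ENNReal.ofReal (n : ℝ) ≤ R s} with hT
    have hub : ∀ s ∈ T, s ≤ (CU / n) ^ α⁻¹ := by
      rintro s ⟨hs0, hsR⟩
      have hst₀ : s < t₀ := by
        by_contra hcon
        push_neg at hcon
        have h1 : R s ≤ R (t₀ / 2) := hmono (t₀ / 2) s (by linarith)
        have h2 : R (t₀ / 2) ≤ ENNReal.ofReal (CU * (t₀ / 2) ^ (-α)) := hup _ (by positivity)
        have h4 : (n : ℝ) ≤ CU * (t₀ / 2) ^ (-α) :=
          (ENNReal.ofReal_le_ofReal_iff (by positivity)).mp (hsR.trans (h1.trans h2))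
        linarith
      have h5 : (n : ℝ) ≤ CU * s ^ (-α) :=
        (ENNReal.ofReal_le_ofReal_iff (by positivity)).mp (hsR.trans (hup s hs0))
      have hsα : 0 < s ^ α := Real.rpow_pos_of_pos hs0 _
      rw [Real.rpow_neg hs0.le] at h5
      have h7 : (n : ℝ) * s ^ α ≤ CU := by
        have h8 := mul_le_mul_of_nonneg_right h5 hsα.le
        rwa [mul_assoc, inv_mul_cancel₀ hsα.ne', mul_one] at h8
      have h6 : s ^ α ≤ CU / n := by
        rw [le_div_iff₀ hnpos]
        calc s ^ α * n = n * s ^ α := mul_comm _ _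
          _ ≤ CU := h7
      have h9 := Real.rpow_le_rpow hsα.le h6 (inv_pos.mpr hα).le
      rwa [Real.rpow_rpow_inv hs0.le hα.ne'] at h9
    have htn0 : 0 < (cL / n) ^ α⁻¹ := Real.rpow_pos_of_pos (div_pos hcL0 hnpos) _
    have tmem : (cL / n) ^ α⁻¹ ∈ T := by
      refine ⟨htn0, ?_⟩
      have htnt₀ : (cL / n) ^ α⁻¹ < t₀ := by
        have h1 : cL / n < t₀ ^ α := by
          rw [div_lt_iff₀ hnpos]
          rw [div_lt_iff₀ (Real.rpow_pos_of_pos ht₀ α)] at hna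
          nlinarith [hna]
        have h2 := Real.rpow_lt_rpow (by positivity) h1 (inv_pos.mpr hα)
        rwa [Real.rpow_rpow_inv ht₀.le hα.ne'] at h2
      refine le_trans (le_of_eq ?_) (hlo _ htn0 htnt₀)
      congr 1
      rw [Real.rpow_neg htn0.le, Real.rpow_inv_rpow (by positivity) hα.ne']
      field_simp
    have key1 : (cL / n) ^ α⁻¹ ≤ Rplus n := by
      rw [hRp]
      exact le_csSup ⟨(CU / n) ^ α⁻¹, hub⟩ tmem
    have key2 : Rplus n ≤ (CU / n) ^ α⁻¹ := by
      rw [hRp]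
      exact Real.sSup_le hub (Real.rpow_nonneg (by positivity) _)
    have hexp : α⁻¹ = p / (2 * (1 + β)) := by rw [hα', inv_div]
    have heq : ∀ K : ℝ, 0 < K →
        (K / n) ^ α⁻¹ = K ^ α⁻¹ * (n : ℝ) ^ (-(p / (2 * (1 + β)))) := by
      intro K hK
      rw [Real.div_rpow hK.le hnpos.le, ← hexp, Real.rpow_neg hnpos.le, div_eq_mul_inv]
    constructor
    · exact le_trans (le_of_eq (heq cL hcL0).symm) key1
    · exact le_trans key2 (le_of_eq (heq CU hCU0))
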